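/- Let n ≥ 1 and let C ⊆ F_q^n be a self-orthogonal linear code (C ⊆ C^⊥) of dimension k. Define F : F_q^n → ℝ by F(0) = 1, F(x) = 1 − k/n for x ∈ C ∖ {0}, F(x) = k/n for x ∈ C^⊥ ∖ C, and F(x) = 0 for x ∈ F_q^n ∖ C^⊥. Then F is a fuzzy self-orthogonal code in F_q^n; in particular |Im(F)| > 1 and (F_{1−α})^⊥ = F_α for every α ∈ Im(F). -/

import Mathlib

open scoped BigOperators

/-- A fuzzy set in `V`: a membership function with values in `[0,1]`. -/
def IsFuzzySet {V : Type*} (A : V → ℝ) : Prop :=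
  ∀ x, 0 ≤ A x ∧ A x ≤ 1

/-- The upper `α`-level cut of a fuzzy set `A`. -/
def levelCut {V : Type*} (A : V → ℝ) (α : ℝ) : Set V :=
  {x | α ≤ A x}

/-- A set of vectors is an `F`-linear subspace. -/
def IsFLinearSet (F : Type*) {V : Type*} [Field F] [AddCommGroup V] [Module F V]
    (s : Set V) : Prop :=
  ∃ W : Submodule F V, s = (W : Set V)

/-- A fuzzy linear code: a fuzzy set all of whose nonempty upper `α`-level cuts
(for `α ∈ [0,1]`) are linear subspaces. -/
def IsFuzzyLinearCode (F : Type*) {V : Type*} [Field F] [AddCommGroup V] [Module F V]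
    (A : V → ℝ) : Prop :=
  IsFuzzySet A ∧
    ∀ α ∈ Set.Icc (0 : ℝ) 1, (levelCut A α).Nonempty → IsFLinearSet F (levelCut A α)

/-- The Euclidean dual of a set of vectors in `F^n`. -/
def dualSet {F : Type*} [Field F] {n : ℕ} (S : Set (Fin n → F)) : Set (Fin n → F) :=
  {y | ∀ x ∈ S, ∑ i, x i * y i = 0}

/-- A fuzzy self-orthogonal code: a fuzzy linear code with `|Im A| > 1` such that
`(A_{1-α})^⊥ = A_α` for every `α ∈ Im A`. -/
def IsFuzzySelfOrthogonal {F : Type*} [Field F] {n : ℕ} (A : (Fin n → F) → ℝ) : Prop :=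
  IsFuzzyLinearCode F A ∧ 1 < (Set.range A).ncard ∧
    ∀ α ∈ Set.range A, dualSet (levelCut A (1 - α)) = levelCut A α

/-- A fuzzy self-dual code: a fuzzy self-orthogonal code such that `(A_β)^⊥ = A_β`
for some `β ∈ Im A`. -/
def IsFuzzySelfDual {F : Type*} [Field F] {n : ℕ} (A : (Fin n → F) → ℝ) : Prop :=
  IsFuzzySelfOrthogonal A ∧ ∃ β ∈ Set.range A, dualSet (levelCut A β) = levelCut A β

section Aux

open LinearMap (BilinForm)

/-- The standard dot-product bilinear form on `Fq^n`. -/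
noncomputable def dotForm (Fq : Type) [Field Fq] (n : ℕ) : BilinForm Fq (Fin n → Fq) :=
  LinearMap.mk₂ Fq (fun x y => ∑ i, x i * y i)
    (by intros; simp [add_mul, Finset.sum_add_distrib])
    (by intros; rw [Finset.smul_sum]; exact Finset.sum_congr rfl (fun i _ => by simp; ring))
    (by intros; simp [mul_add, Finset.sum_add_distrib])
    (by intros; rw [Finset.smul_sum]; exact Finset.sum_congr rfl (fun i _ => by simp; ring))

lemma dotForm_apply {Fq : Type} [Field Fq] {n : ℕ} (x y : Fin n → Fq) :
    dotForm Fq n x y = ∑ i, x i * y i := rfl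

lemma dotForm_refl {Fq : Type} [Field Fq] {n : ℕ} : (dotForm Fq n).IsRefl := by
  intro x y h
  simpa [dotForm_apply, mul_comm] using h

lemma dotForm_nondeg {Fq : Type} [Field Fq] {n : ℕ} : (dotForm Fq n).Nondegenerate := by
  refine (LinearMap.IsRefl.nondegenerate_iff_separatingLeft (B := dotForm Fq n) dotForm_refl).2 ?_
  intro x hx
  funext i
  have := hx (Pi.single i 1)
  simp only [dotForm_apply, Pi.single_apply, mul_ite, mul_one, mul_zero,
    Finset.sum_ite_eq', Finset.mem_univ, if_true] at this
  simpa using this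

lemma dualSet_eq_orthogonal {Fq : Type} [Field Fq] {n : ℕ} (C : Submodule Fq (Fin n → Fq)) :
    dualSet (C : Set (Fin n → Fq)) = ((dotForm Fq n).orthogonal C : Set (Fin n → Fq)) := rfl

end Aux

set_option maxHeartbeats 1000000 in
/-- embedding a self-orthogonal code: for a self-orthogonal `[n, k]` code
`C ⊆ C^⊥` over `F_q`, the fuzzy set `F` with `F 0 = 1`, `F x = 1 - k/n` on `C ∖ {0}`,
`F x = k/n` on `C^⊥ ∖ C`, and `F x = 0` off `C^⊥` is a fuzzy self-orthogonal code;
in particular `|Im F| > 1` and `(F_{1-α})^⊥ = F_α` for every `α ∈ Im F`. -/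
theorem fuzzySelfOrthogonal_of_selfOrthogonal
    {Fq : Type} [Field Fq] [Fintype Fq] {n k : ℕ} (hn : 1 ≤ n)
    (C : Submodule Fq (Fin n → Fq))
    (hso : (C : Set (Fin n → Fq)) ⊆ dualSet (C : Set (Fin n → Fq)))
    (hk : Module.finrank Fq C = k)
    (F : (Fin n → Fq) → ℝ)
    (hF0 : F 0 = 1)
    (hFC : ∀ x ∈ (C : Set (Fin n → Fq)) \ {0}, F x = 1 - (k : ℝ) / (n : ℝ))
    (hFdual : ∀ x ∈ dualSet (C : Set (Fin n → Fq)) \ (C : Set (Fin n → Fq)),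
      F x = (k : ℝ) / (n : ℝ))
    (hFout : ∀ x ∉ dualSet (C : Set (Fin n → Fq)), F x = 0) :
    IsFuzzySelfOrthogonal F := by
  classical
  have hfin : Module.finrank Fq (Fin n → Fq) = n := by
    simp [Module.finrank_pi]
  obtain ⟨D, hDset, hDk, hdual_D⟩ :
      ∃ D : Submodule Fq (Fin n → Fq),
        dualSet (C : Set (Fin n → Fq)) = (D : Set (Fin n → Fq)) ∧
        Module.finrank Fq D = n - k ∧
        dualSet (D : Set (Fin n → Fq)) = (C : Set (Fin n → Fq)) := by
    refine ⟨(dotForm Fq n).orthogonal C, rfl, ?_, ?_⟩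
    · rw [LinearMap.BilinForm.finrank_orthogonal dotForm_nondeg C, hfin, hk]
    · rw [dualSet_eq_orthogonal,
        LinearMap.BilinForm.orthogonal_orthogonal dotForm_nondeg dotForm_refl]
  rw [hDset] at hFdual hFout
  set a : ℝ := (k : ℝ) / (n : ℝ) with ha_def
  have hn0 : (0 : ℝ) < (n : ℝ) := by exact_mod_cast hn
  have hCD : C ≤ D := by
    intro x hx
    have h2 := hso hx
    rwa [hDset] at h2
  have hkn : k ≤ n := by
    have h := Submodule.finrank_le (R := Fq) C
    rw [hfin, hk] at h; exact h
  have hkk : k ≤ n - k := by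
    have := Submodule.finrank_mono hCD
    rwa [hk, hDk] at this
  have h2k : k + k ≤ n := by omega
  -- real inequalities
  have ha0 : 0 ≤ a := by positivity
  have haa : a + a ≤ 1 := by
    rw [ha_def, ← add_div, div_le_one hn0]
    exact_mod_cast h2k
  have ha1 : a ≤ 1 - a := by linarith
  -- value facts
  have hvC : ∀ x : Fin n → Fq, x ∈ C → x ≠ 0 → F x = 1 - a :=
    fun x hx hx0 => hFC x ⟨hx, hx0⟩
  have hvD : ∀ x : Fin n → Fq, x ∈ D → x ∉ C → F x = a :=
    fun x hx hx0 => hFdual x ⟨hx, hx0⟩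
  have hvO : ∀ x : Fin n → Fq, x ∉ D → F x = 0 := fun x hx => hFout x hx
  have hzC : (0 : Fin n → Fq) ∈ C := C.zero_mem
  -- bounds on F
  have hFbd : ∀ x : Fin n → Fq, 0 ≤ F x ∧ F x ≤ 1 := by
    intro x
    by_cases h0 : x = 0
    · subst h0; rw [hF0]; constructor <;> norm_num
    · by_cases hC : x ∈ C
      · rw [hvC x hC h0]; constructor <;> linarith
      · by_cases hD : x ∈ D
        · rw [hvD x hD hC]; constructor <;> linarith
        · rw [hvO x hD]; constructor <;> norm_num
  -- level cut computations
  have cut_top : ∀ α : ℝ, α ≤ 0 → levelCut F α = Set.univ := by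
    intro α hα
    ext x; simp only [levelCut, Set.mem_setOf_eq, Set.mem_univ, iff_true]
    exact le_trans hα (hFbd x).1
  have cut_D : ∀ α : ℝ, 0 < α → α ≤ a → levelCut F α = (D : Set (Fin n → Fq)) := by
    intro α hα1 hα2
    ext x
    simp only [levelCut, Set.mem_setOf_eq, SetLike.mem_coe]
    constructor
    · intro hx
      by_contra hD
      rw [hvO x hD] at hx; linarith
    · intro hx
      by_cases h0 : x = 0
      · subst h0; rw [hF0]; linarith
      · by_cases hC : x ∈ C
        · rw [hvC x hC h0]; linarith
        · rw [hvD x hx hC]; linarith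
  have cut_C : ∀ α : ℝ, a < α → α ≤ 1 - a → levelCut F α = (C : Set (Fin n → Fq)) := by
    intro α hα1 hα2
    ext x
    simp only [levelCut, Set.mem_setOf_eq, SetLike.mem_coe]
    constructor
    · intro hx
      by_contra hC
      by_cases hD : x ∈ D
      · rw [hvD x hD hC] at hx; linarith
      · rw [hvO x hD] at hx; linarith
    · intro hx
      by_cases h0 : x = 0
      · subst h0; rw [hF0]; linarith
      · rw [hvC x hx h0]; linarith
  have cut_one : ∀ α : ℝ, 1 - a < α → α ≤ 1 → levelCut F α = {(0 : Fin n → Fq)} := by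
    intro α hα1 hα2
    ext x
    simp only [levelCut, Set.mem_setOf_eq, Set.mem_singleton_iff]
    constructor
    · intro hx
      by_contra h0
      by_cases hC : x ∈ C
      · rw [hvC x hC h0] at hx; linarith
      · by_cases hD : x ∈ D
        · rw [hvD x hD hC] at hx; linarith
        · rw [hvO x hD] at hx; linarith
    · intro hx; subst hx; rw [hF0]; linarith
  -- dual computations
  have hdual_univ : dualSet (Set.univ : Set (Fin n → Fq)) = {(0 : Fin n → Fq)} := by
    ext y
    simp only [dualSet, Set.mem_setOf_eq, Set.mem_singleton_iff]
    constructor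
    · intro h
      apply dotForm_nondeg.1
      intro m
      have := h m (Set.mem_univ m)
      rw [dotForm_apply]
      simpa [mul_comm] using this
    · intro h x _; subst h; simp
  have hdual_zero : dualSet ({(0 : Fin n → Fq)} : Set (Fin n → Fq)) = Set.univ := by
    ext y
    simp only [dualSet, Set.mem_setOf_eq, Set.mem_univ, iff_true, Set.mem_singleton_iff]
    intro x hx; subst hx; simp
  -- a = 0 iff k = 0 iff C = ⊥
  have hCbot : a = 0 → C = ⊥ := by
    intro h
    have hk0 : k = 0 := by
      by_contra hne
      have hpos : (0 : ℝ) < (k : ℝ) / (n : ℝ) :=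
        div_pos (by exact_mod_cast Nat.pos_of_ne_zero hne) hn0
      rw [ha_def] at h
      linarith
    rw [← Submodule.finrank_eq_zero (R := Fq) (M := Fin n → Fq) (S := C), hk, hk0]
  have hapos_of_C : ∀ x : Fin n → Fq, x ∈ C → x ≠ 0 → 0 < a := by
    intro x hx h0
    rcases lt_or_eq_of_le ha0 with h | h
    · exact h
    · exfalso; apply h0
      have := hCbot h.symm
      rw [this] at hx
      simpa using hx
  -- C = D when a = 1 - a
  have hCeqD : a = 1 - a → C = D := by
    intro h
    have h2 : (k : ℝ) + k = n := by
      have : a + a = 1 := by linarith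
      rw [ha_def, ← add_div, div_eq_one_iff_eq hn0.ne'] at this
      exact_mod_cast this
    have h2' : k + k = n := by exact_mod_cast h2
    exact Submodule.eq_of_le_of_finrank_eq hCD (by rw [hk, hDk]; omega)
  have hcut1a : 0 < a → levelCut F (1 - a) = (C : Set (Fin n → Fq)) := by
    intro hpos
    rcases lt_or_eq_of_le ha1 with h | h
    · exact cut_C (1 - a) h le_rfl
    · rw [cut_D (1 - a) (by linarith) (le_of_eq h.symm), ← hCeqD h]
  have hcut_at_1 : levelCut F 1 = {(0 : Fin n → Fq)} := by
    rcases lt_or_eq_of_le ha0 with h | h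
    · exact cut_one 1 (by linarith) le_rfl
    · rw [cut_C 1 (by linarith) (by linarith), hCbot h.symm]
      simp
  refine ⟨⟨hFbd, ?_⟩, ?_, ?_⟩
  · -- level cuts are linear
    rintro α ⟨hα0, hα1⟩ -
    rcases eq_or_lt_of_le hα0 with h | h
    · exact ⟨⊤, by rw [cut_top α h.symm.le]; simp⟩
    · by_cases h1 : α ≤ a
      · exact ⟨D, cut_D α h h1⟩
      · by_cases h2 : α ≤ 1 - a
        · exact ⟨C, cut_C α (not_le.1 h1) h2⟩
        · exact ⟨⊥, by rw [cut_one α (not_le.1 h2) hα1]; simp⟩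
  · -- more than one value
    have h1 : (1 : ℝ) ∈ Set.range F := ⟨0, hF0⟩
    obtain ⟨x, hx0⟩ : ∃ x : Fin n → Fq, x ≠ 0 := by
      refine ⟨Pi.single ⟨0, hn⟩ 1, ?_⟩
      intro h
      have := congrFun h ⟨0, hn⟩
      simp at this
    have hx1 : F x ≠ 1 := by
      by_cases hC : x ∈ C
      · rw [hvC x hC hx0]
        have := hapos_of_C x hC hx0
        linarith
      · by_cases hD : x ∈ D
        · rw [hvD x hD hC]; intro h; rw [h] at ha1 haa; linarith
        · rw [hvO x hD]; norm_num
    have hfinr : (Set.range F).Finite := by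
      apply Set.Finite.subset ((((Set.finite_singleton 1).insert (1 - a)).insert a).insert 0)
      rintro - ⟨y, rfl⟩
      by_cases h0 : y = 0
      · subst h0; rw [hF0]; simp
      · by_cases hC : y ∈ C
        · rw [hvC y hC h0]; simp
        · by_cases hD : y ∈ D
          · rw [hvD y hD hC]; simp
          · rw [hvO y hD]; simp
    rw [Set.one_lt_ncard hfinr]
    exact ⟨1, h1, F x, ⟨x, rfl⟩, fun h => hx1 h.symm⟩
  · -- duality
    rintro α ⟨x, rfl⟩
    have case0 : F x = 0 → dualSet (levelCut F (1 - F x)) = levelCut F (F x) := by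
      intro h
      rw [h, sub_zero, hcut_at_1, hdual_zero, cut_top 0 le_rfl]
    by_cases h0 : x = 0
    · subst h0
      rw [hF0, sub_self, cut_top 0 le_rfl, hdual_univ, hcut_at_1]
    · by_cases hC : x ∈ C
      · have hpos := hapos_of_C x hC h0
        rw [hvC x hC h0, show (1 : ℝ) - (1 - a) = a by ring,
          cut_D a hpos le_rfl, hdual_D, hcut1a hpos]
      · by_cases hD : x ∈ D
        · rcases lt_or_eq_of_le ha0 with hpos | hzero
          · rw [hvD x hD hC, hcut1a hpos, hDset, cut_D a hpos le_rfl]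
          · exact case0 (by rw [hvD x hD hC, ← hzero])
        · exact case0 (hvO x hD)
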